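/- Let b = (3 + √5)/2, γ = 1/2, δ = 3/2, and define l(γ, δ, T₀, b) = (log(T₀·(b − 1) + 1)/log(T₀·(b − 1)))^δ · b^γ·(b − 1)^γ/(b^γ − 1). Then for every real T₀ ≥ 100, l(γ, δ, T₀, b) ≤ 3.34. -/

import Mathlib

set_option maxHeartbeats 1000000


/-- The doubling-trick loss constant with `b = (3 + √5)/2`, `γ = 1/2`, `δ = 3/2` is at most
`3.34` for every `T₀ ≥ 100`. -/
theorem doubling_trick_constant_le
    (b γ δ : ℝ) (hb : b = (3 + Real.sqrt 5) / 2) (hγ : γ = 1 / 2) (hδ : δ = 3 / 2)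
    (l : ℝ → ℝ)
    (hl : ∀ T₀ : ℝ, l T₀ = (Real.log (T₀ * (b - 1) + 1) / Real.log (T₀ * (b - 1))) ^ δ
        * (b ^ γ * (b - 1) ^ γ / (b ^ γ - 1))) :
    ∀ T₀ : ℝ, 100 ≤ T₀ → l T₀ ≤ 3.34 := by
  intro T₀ hT₀
  rw [hl]
  set s := Real.sqrt 5 with hsdef
  have h5 : s ^ 2 = 5 := Real.sq_sqrt (by norm_num)
  have hs0 : 0 ≤ s := Real.sqrt_nonneg 5
  have hs1 : 2.2360679 < s := by nlinarith
  have hs2 : s < 2.2360680 := by nlinarith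
  have hb1 : b - 1 = (1 + s) / 2 := by rw [hb]; ring
  have hφpos : (0:ℝ) < (1 + s) / 2 := by nlinarith
  -- b ^ γ = (1+s)/2
  have hbγ : b ^ γ = (1 + s) / 2 := by
    rw [hγ, ← Real.sqrt_eq_rpow, hb,
      show (3 + s) / 2 = ((1 + s) / 2) ^ 2 by linear_combination -h5 / 4]
    exact Real.sqrt_sq hφpos.le
  set t := Real.sqrt ((1 + s) / 2) with htdef
  have hb1γ : (b - 1) ^ γ = t := by rw [hγ, ← Real.sqrt_eq_rpow, hb1]
  have ht2 : t ^ 2 = (1 + s) / 2 := Real.sq_sqrt hφpos.le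
  have ht0 : 0 ≤ t := Real.sqrt_nonneg _
  have htlt : t < 1.272020 := by nlinarith
  -- constant factor bound
  have hdenpos : (0:ℝ) < b ^ γ - 1 := by rw [hbγ]; nlinarith
  have hC : b ^ γ * (b - 1) ^ γ / (b ^ γ - 1) ≤ 3.3302 := by
    rw [hbγ, hb1γ, div_le_iff₀ (show (0:ℝ) < (1+s)/2 - 1 by nlinarith)]
    nlinarith
  have hCpos : 0 ≤ b ^ γ * (b - 1) ^ γ / (b ^ γ - 1) := by
    apply div_nonneg _ hdenpos.le
    rw [hbγ, hb1γ]; positivity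
  -- log factor bound
  set x := T₀ * (b - 1) with hxdef
  have hx : 160 ≤ x := by rw [hxdef, hb1]; nlinarith
  have hxpos : (0:ℝ) < x := by linarith
  have hexp5 : Real.exp 5 ≤ x := by
    have h1 : Real.exp 1 < 2.7182818286 := Real.exp_one_lt_d9
    have h2 : Real.exp 1 ^ (5:ℕ) = Real.exp 5 := by
      rw [← Real.exp_nat_mul]; norm_num
    have h3 : Real.exp 1 ^ (5:ℕ) < 2.7182818286 ^ (5:ℕ) :=
      pow_lt_pow_left₀ h1 (Real.exp_pos 1).le (by norm_num)
    have : (2.7182818286:ℝ) ^ (5:ℕ) ≤ 160 := by norm_num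
    linarith [h2 ▸ h3]
  have hlogx : 5 ≤ Real.log x := by
    have := Real.log_le_log (Real.exp_pos 5) hexp5
    rwa [Real.log_exp] at this
  have hlog2 : Real.log (x + 1) ≤ Real.log x + 1 / 160 := by
    have hq : Real.log (x + 1) - Real.log x = Real.log ((x + 1) / x) :=
      (Real.log_div (by linarith) (by linarith)).symm
    have hq2 : Real.log ((x + 1) / x) ≤ (x + 1) / x - 1 :=
      Real.log_le_sub_one_of_pos (by positivity)
    have hq3 : (x + 1) / x - 1 = 1 / x := by field_simp; ring
    have hq4 : 1 / x ≤ 1 / 160 := by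
      apply one_div_le_one_div_of_le <;> linarith
    linarith [hq ▸ (hq2.trans (hq3 ▸ hq4))]
  have hlogpos : 0 < Real.log x := by linarith
  set r := Real.log (x + 1) / Real.log x with hrdef
  have hr1 : 1 ≤ r := by
    rw [hrdef, le_div_iff₀ hlogpos, one_mul]
    exact Real.log_le_log hxpos (by linarith)
  have hr : r ≤ 1 + 1 / 800 := by
    rw [hrdef, div_le_iff₀ hlogpos]
    nlinarith
  have hpow : r ^ δ ≤ 1.0026 := by
    rw [hδ]
    calc r ^ ((3:ℝ) / 2) ≤ r ^ (2:ℝ) :=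
          Real.rpow_le_rpow_of_exponent_le hr1 (by norm_num)
      _ = r ^ (2:ℕ) := by rw [← Real.rpow_natCast r 2]; norm_num
      _ ≤ 1.0026 := by nlinarith
  have hpow0 : 0 ≤ r ^ δ := Real.rpow_nonneg (by linarith) δ
  calc r ^ δ * (b ^ γ * (b - 1) ^ γ / (b ^ γ - 1))
      ≤ 1.0026 * 3.3302 := mul_le_mul hpow hC hCpos (by norm_num)
    _ ≤ 3.34 := by norm_num
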